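/- Let P be a finite set of points in the Euclidean plane ℝ² whose convex hull is a polygon with vertices h_0, h_1, …, h_{m−1} listed in cyclic (counterclockwise) order along the boundary of the convex hull, where m ≥ 3. Then every closed polygonal path w_0, w_1, …, w_N in ℝ² with w_N = w_0 that visits every point of P (i.e., P ⊆ {w_0, …, w_{N−1}}) has total length Σ_{k=0}^{N−1} dist(w_k, w_{k+1}) at least the perimeter of the convex hull, Σ_{j=0}^{m−1} dist(h_j, h_{(j+1) mod m}). -/

import Mathlib

/-- The planar cross product (orientation test): positive iff `a, b, c` make a
counterclockwise (left) turn. -/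
noncomputable def cross2 (a b c : EuclideanSpace ℝ (Fin 2)) : ℝ :=
  (b 0 - a 0) * (c 1 - a 1) - (b 1 - a 1) * (c 0 - a 0)

open Real intervalIntegral


lemma integral_abs_cos : ∫ θ in (0:ℝ)..(2*π), |Real.cos θ| = 4 := by
  have hc : ∀ x y : ℝ, IntervalIntegrable (fun θ => |Real.cos θ|) MeasureTheory.volume x y :=
    fun x y => (continuous_abs.comp Real.continuous_cos).intervalIntegrable x y
  have h1 : ∫ θ in (0:ℝ)..(π/2), |Real.cos θ| = 1 := by
    rw [intervalIntegral.integral_congr (g := Real.cos)]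
    · simp [integral_cos]
    · intro x hx
      rw [Set.uIcc_of_le (by positivity)] at hx
      exact abs_of_nonneg (Real.cos_nonneg_of_mem_Icc ⟨by linarith [hx.1, pi_pos], hx.2⟩)
  have h2 : ∫ θ in (π/2)..(π/2 + π), |Real.cos θ| = 2 := by
    rw [intervalIntegral.integral_congr (g := fun x => -Real.cos x)]
    · rw [intervalIntegral.integral_neg, integral_cos]
      rw [Real.sin_add_pi]
      simp
      norm_num
    · intro x hx
      rw [Set.uIcc_of_le (by linarith [pi_pos])] at hx
      exact abs_of_nonpos (Real.cos_nonpos_of_pi_div_two_le_of_le hx.1 (by linarith [hx.2]))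
  have h3 : ∫ θ in (π/2 + π)..(2*π), |Real.cos θ| = 1 := by
    rw [intervalIntegral.integral_congr (g := Real.cos)]
    · rw [integral_cos, Real.sin_add_pi]
      simp
    · intro x hx
      rw [Set.uIcc_of_le (by linarith [pi_pos])] at hx
      have : Real.cos (x - 2*π) = Real.cos x := Real.cos_sub_two_pi x
      have hge : 0 ≤ Real.cos x := by
        rw [← this]
        apply Real.cos_nonneg_of_mem_Icc
        constructor
        · linarith [hx.1, pi_pos]
        · linarith [hx.2, pi_pos]
      exact abs_of_nonneg hge
  have e1 := intervalIntegral.integral_add_adjacent_intervals (a := (0:ℝ)) (b := π/2)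
    (c := π/2 + π) (hc _ _) (hc _ _)
  have e2 := intervalIntegral.integral_add_adjacent_intervals (a := (0:ℝ)) (b := π/2 + π)
    (c := 2*π) (hc _ _) (hc _ _)
  rw [← e2, ← e1, h1, h2, h3]
  norm_num

lemma integral_abs_lin (a b : ℝ) :
    ∫ θ in (0:ℝ)..(2*π), |a * Real.cos θ + b * Real.sin θ| = 4 * Real.sqrt (a^2 + b^2) := by
  by_cases hab : a = 0 ∧ b = 0
  · simp [hab.1, hab.2]
  · set r := Real.sqrt (a^2 + b^2) with hr
    have hr0 : 0 < r := by
      apply Real.sqrt_pos.2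
      rcases (not_and_or.1 hab) with ha | hb
      · positivity
      · positivity
    set z : ℂ := ⟨a, b⟩ with hz
    have hzne : z ≠ 0 := fun h0 =>
      hab ⟨by simpa using congrArg Complex.re h0, by simpa using congrArg Complex.im h0⟩
    have habs : ‖z‖ = r := by
      rw [Complex.norm_def, Complex.normSq_mk, hr]
      ring_nf
    set φ := Complex.arg z with hφ
    have hcos : Real.cos φ = a / r := by
      rw [hφ, Complex.cos_arg hzne, habs]
    have hsin : Real.sin φ = b / r := by
      rw [hφ, Complex.sin_arg, habs]
    have key : ∀ θ : ℝ, a * Real.cos θ + b * Real.sin θ = r * Real.cos (θ - φ) := by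
      intro θ
      rw [Real.cos_sub, hcos, hsin]
      field_simp
    calc ∫ θ in (0:ℝ)..(2*π), |a * Real.cos θ + b * Real.sin θ|
        = ∫ θ in (0:ℝ)..(2*π), r * |Real.cos (θ - φ)| := by
          apply intervalIntegral.integral_congr
          intro x _
          show |a * Real.cos x + b * Real.sin x| = r * |Real.cos (x - φ)|
          rw [key x, abs_mul, abs_of_pos hr0]
      _ = r * ∫ θ in (0:ℝ)..(2*π), |Real.cos (θ - φ)| := intervalIntegral.integral_const_mul _ _
      _ = r * ∫ θ in (0-φ)..(2*π-φ), |Real.cos θ| := by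
          rw [intervalIntegral.integral_comp_sub_right (fun θ => |Real.cos θ|) φ]
      _ = r * ∫ θ in (0:ℝ)..(2*π), |Real.cos θ| := by
          have hp : Function.Periodic (fun x => |Real.cos x|) (2*π) :=
            Real.cos_periodic.comp abs
          have := hp.intervalIntegral_add_eq (0 - φ) 0
          rw [show (0:ℝ) - φ + 2*π = 2*π - φ by ring, zero_add] at this
          rw [this]
      _ = 4 * r := by rw [integral_abs_cos]; ring


lemma pt_ext {x y : EuclideanSpace ℝ (Fin 2)} (h0 : x 0 = y 0) (h1 : x 1 = y 1) : x = y := by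
  ext i
  fin_cases i <;> assumption

lemma pt_comb (s r : ℝ) (x y : EuclideanSpace ℝ (Fin 2)) (i : Fin 2) :
    (s • x + r • y) i = s * x i + r * y i := by
  simp [PiLp.add_apply, PiLp.smul_apply, smul_eq_mul]

lemma exists_crossing (g : ℕ → ℝ) (t : ℝ) :
    ∀ j i, i ≤ j → t ≤ g i → g j < t →
    ∃ k, i ≤ k ∧ k < j ∧ t ≤ g k ∧ g (k + 1) < t := by
  intro j
  induction j with
  | zero =>
    intro i hij hi hj
    interval_cases i
    exact absurd hj (not_lt.2 hi)
  | succ n ih =>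
    intro i hij hi hj
    have hin : i ≤ n := by
      by_cases hi' : i ≤ n
      · exact hi'
      · have : i = n + 1 := by omega
        subst this
        exact absurd hj (not_lt.2 hi)
    by_cases hn : t ≤ g n
    · exact ⟨n, hin, Nat.lt_succ_self n, hn, hj⟩
    · obtain ⟨k, hk1, hk2, hk3, hk4⟩ := ih i hin hi (not_le.1 hn)
      exact ⟨k, hk1, hk2.trans (Nat.lt_succ_self n), hk3, hk4⟩

set_option maxHeartbeats 1000000 in
lemma no_alternation
    (P : Finset (EuclideanSpace ℝ (Fin 2)))
    (m : ℕ) (h : ℕ → EuclideanSpace ℝ (Fin 2))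
    (hinj : Set.InjOn h (Set.Iio m))
    (hext : ∀ j < m, h j ∈ Set.extremePoints ℝ (convexHull ℝ (P : Set (EuclideanSpace ℝ (Fin 2)))))
    (hP : ∀ j < m, h j ∈ P)
    (hccw : ∀ j < m, ∀ p ∈ P, 0 ≤ cross2 (h j) (h ((j + 1) % m)) p)
    (u v : ℝ) (huv : u ^ 2 + v ^ 2 = 1)
    (a b c d : ℕ) (hab : a < b) (hbc : b < c) (hcd : c < d) (hdm : d < m)
    (h1 : u * h b 0 + v * h b 1 < u * h a 0 + v * h a 1)
    (h2 : u * h b 0 + v * h b 1 < u * h c 0 + v * h c 1)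
    (h3 : u * h d 0 + v * h d 1 < u * h a 0 + v * h a 1)
    (h4 : u * h d 0 + v * h d 1 < u * h c 0 + v * h c 1) : False := by
  set t := min (u * h a 0 + v * h a 1) (u * h c 0 + v * h c 1) with ht
  obtain ⟨p1, hp1a, hp1b, hfp1, hfq1⟩ :=
    exists_crossing (fun i => u * h i 0 + v * h i 1) t b a (le_of_lt hab)
      (min_le_left _ _) (lt_min h1 h2)
  obtain ⟨p3, hp3a, hp3b, hfp3, hfq3⟩ :=
    exists_crossing (fun i => u * h i 0 + v * h i 1) t d c (le_of_lt hcd)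
      (min_le_right _ _) (lt_min h3 h4)
  simp only [] at hfp1 hfq1 hfp3 hfq3
  set q1 := p1 + 1 with hq1def
  set q3 := p3 + 1 with hq3def
  have hp1m : p1 < m := by omega
  have hq1m : q1 < m := by omega
  have hp3m : p3 < m := by omega
  have hq3m : q3 < m := by omega
  have hp1q1 : (p1 + 1) % m = q1 := Nat.mod_eq_of_lt hq1m
  have hp3q3 : (p3 + 1) % m = q3 := Nat.mod_eq_of_lt hq3m
  have c13a : 0 ≤ (h q1 0 - h p1 0) * (h p3 1 - h p1 1) - (h q1 1 - h p1 1) * (h p3 0 - h p1 0) := by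
    have := hccw p1 hp1m (h p3) (hP p3 hp3m)
    rwa [hp1q1] at this
  have c13b : 0 ≤ (h q1 0 - h p1 0) * (h q3 1 - h p1 1) - (h q1 1 - h p1 1) * (h q3 0 - h p1 0) := by
    have := hccw p1 hp1m (h q3) (hP q3 hq3m)
    rwa [hp1q1] at this
  have c31a : 0 ≤ (h q3 0 - h p3 0) * (h p1 1 - h p3 1) - (h q3 1 - h p3 1) * (h p1 0 - h p3 0) := by
    have := hccw p3 hp3m (h p1) (hP p1 hp1m)
    rwa [hp3q3] at this
  have c31b : 0 ≤ (h q3 0 - h p3 0) * (h q1 1 - h p3 1) - (h q3 1 - h p3 1) * (h q1 0 - h p3 0) := by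
    have := hccw p3 hp3m (h q1) (hP q1 hq1m)
    rwa [hp3q3] at this
  have hd1 : 0 < (u * h p1 0 + v * h p1 1) - (u * h q1 0 + v * h q1 1) := by linarith
  have hd3 : 0 < (u * h p3 0 + v * h p3 1) - (u * h q3 0 + v * h q3 1) := by linarith
  set s1 := ((u * h p1 0 + v * h p1 1) - t) / ((u * h p1 0 + v * h p1 1) - (u * h q1 0 + v * h q1 1)) with hs1def
  set s3 := ((u * h p3 0 + v * h p3 1) - t) / ((u * h p3 0 + v * h p3 1) - (u * h q3 0 + v * h q3 1)) with hs3def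
  have hs1_0 : 0 ≤ s1 := div_nonneg (by linarith) (le_of_lt hd1)
  have hs3_0 : 0 ≤ s3 := div_nonneg (by linarith) (le_of_lt hd3)
  have hs1_1 : s1 < 1 := (div_lt_one hd1).2 (by linarith)
  have hs3_1 : s3 < 1 := (div_lt_one hd3).2 (by linarith)
  have hs1 : s1 * ((u * h p1 0 + v * h p1 1) - (u * h q1 0 + v * h q1 1))
      = (u * h p1 0 + v * h p1 1) - t := div_mul_cancel₀ _ (ne_of_gt hd1)
  have hs3 : s3 * ((u * h p3 0 + v * h p3 1) - (u * h q3 0 + v * h q3 1))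
      = (u * h p3 0 + v * h p3 1) - t := div_mul_cancel₀ _ (ne_of_gt hd3)
  set x10 := h p1 0 + s1 * (h q1 0 - h p1 0) with hx10
  set x11 := h p1 1 + s1 * (h q1 1 - h p1 1) with hx11
  set x30 := h p3 0 + s3 * (h q3 0 - h p3 0) with hx30
  set x31 := h p3 1 + s3 * (h q3 1 - h p3 1) with hx31
  have hfx1 : u * x10 + v * x11 = t := by
    rw [hx10, hx11]; linear_combination -hs1
  have hfx3 : u * x30 + v * x31 = t := by
    rw [hx30, hx31]; linear_combination -hs3
  have hw : u * (x30 - x10) + v * (x31 - x11) = 0 := by linear_combination hfx3 - hfx1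
  set K := u * (x31 - x11) - v * (x30 - x10) with hK
  have hw0 : x30 - x10 = -K * v := by
    rw [hK]; linear_combination u * hw - (x30 - x10) * huv
  have hw1 : x31 - x11 = K * u := by
    rw [hK]; linear_combination v * hw - (x31 - x11) * huv
  have hL1x3 : 0 ≤ (h q1 0 - h p1 0) * (x31 - h p1 1) - (h q1 1 - h p1 1) * (x30 - h p1 0) := by
    have hid : (h q1 0 - h p1 0) * (x31 - h p1 1) - (h q1 1 - h p1 1) * (x30 - h p1 0)
        = (1 - s3) * ((h q1 0 - h p1 0) * (h p3 1 - h p1 1) - (h q1 1 - h p1 1) * (h p3 0 - h p1 0))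
          + s3 * ((h q1 0 - h p1 0) * (h q3 1 - h p1 1) - (h q1 1 - h p1 1) * (h q3 0 - h p1 0)) := by
      rw [hx30, hx31]; ring
    rw [hid]
    exact add_nonneg (mul_nonneg (by linarith) c13a) (mul_nonneg hs3_0 c13b)
  have hL3x1 : 0 ≤ (h q3 0 - h p3 0) * (x11 - h p3 1) - (h q3 1 - h p3 1) * (x10 - h p3 0) := by
    have hid : (h q3 0 - h p3 0) * (x11 - h p3 1) - (h q3 1 - h p3 1) * (x10 - h p3 0)
        = (1 - s1) * ((h q3 0 - h p3 0) * (h p1 1 - h p3 1) - (h q3 1 - h p3 1) * (h p1 0 - h p3 0))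
          + s1 * ((h q3 0 - h p3 0) * (h q1 1 - h p3 1) - (h q3 1 - h p3 1) * (h q1 0 - h p3 0)) := by
      rw [hx10, hx11]; ring
    rw [hid]
    exact add_nonneg (mul_nonneg (by linarith) c31a) (mul_nonneg hs1_0 c31b)
  have hL1x1 : (h q1 0 - h p1 0) * (x11 - h p1 1) - (h q1 1 - h p1 1) * (x10 - h p1 0) = 0 := by
    rw [hx10, hx11]; ring
  have hL3x3 : (h q3 0 - h p3 0) * (x31 - h p3 1) - (h q3 1 - h p3 1) * (x30 - h p3 0) = 0 := by
    rw [hx30, hx31]; ring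
  have hstep1 : (h q1 0 - h p1 0) * (x31 - h p1 1) - (h q1 1 - h p1 1) * (x30 - h p1 0)
      = -K * ((u * h p1 0 + v * h p1 1) - (u * h q1 0 + v * h q1 1)) := by
    linear_combination hL1x1 + (h q1 0 - h p1 0) * hw1 - (h q1 1 - h p1 1) * hw0
  have hstep3 : (h q3 0 - h p3 0) * (x11 - h p3 1) - (h q3 1 - h p3 1) * (x10 - h p3 0)
      = K * ((u * h p3 0 + v * h p3 1) - (u * h q3 0 + v * h q3 1)) := by
    linear_combination hL3x3 - (h q3 0 - h p3 0) * hw1 + (h q3 1 - h p3 1) * hw0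
  have hK0 : K = 0 := by
    rw [hstep1] at hL1x3
    rw [hstep3] at hL3x1
    have ha1 : 0 ≤ K := (mul_nonneg_iff_of_pos_right hd3).1 hL3x1
    have ha2 : 0 ≤ -K := by
      have := (mul_nonneg_iff_of_pos_right hd1).1 hL1x3
      linarith
    linarith
  have hxx0 : x30 = x10 := by
    have := hw0; rw [hK0] at this; linarith
  have hxx1 : x31 = x11 := by
    have := hw1; rw [hK0] at this; linarith
  -- now x1 = x3 lies on both crossing edges: derive a contradiction
  have hmem : ∀ j, j < m → h j ∈ convexHull ℝ (P : Set (EuclideanSpace ℝ (Fin 2))) :=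
    fun j hj => subset_convexHull ℝ _ (hP j hj)
  have hinj' : ∀ i j, i < m → j < m → h i = h j → i = j := fun i j hi hj e =>
    hinj (Set.mem_Iio.2 hi) (Set.mem_Iio.2 hj) e
  have hextr : ∀ j, j < m → ∀ y z : EuclideanSpace ℝ (Fin 2),
      y ∈ convexHull ℝ (P : Set (EuclideanSpace ℝ (Fin 2))) →
      z ∈ convexHull ℝ (P : Set (EuclideanSpace ℝ (Fin 2))) →
      h j ∈ openSegment ℝ y z → y = h j ∧ z = h j := by
    intro j hj y z hy hz hseg
    exact ⟨(hext j hj).2 hy hz hseg, (hext j hj).2 hz hy (by rwa [openSegment_symm] at hseg)⟩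
  have hne13 : p1 ≠ p3 := by omega
  have hne1q3 : p1 ≠ q3 := by omega
  have hne3q1 : p3 ≠ q1 := by omega
  have hne11 : p1 ≠ q1 := by omega
  rcases eq_or_lt_of_le hs1_0 with hs1z | hs1p
  · rcases eq_or_lt_of_le hs3_0 with hs3z | hs3p
    · -- both endpoints: h p1 = h p3
      have : h p3 = h p1 := by
        apply pt_ext
        · linear_combination hxx0 - hx30 + hx10 - (h q1 0 - h p1 0) * hs1z
            + (h q3 0 - h p3 0) * hs3z
        · linear_combination hxx1 - hx31 + hx11 - (h q1 1 - h p1 1) * hs1z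
            + (h q3 1 - h p3 1) * hs3z
      exact hne13 (hinj' p1 p3 hp1m hp3m this.symm)
    · -- h p1 ∈ openSegment (h p3) (h q3)
      have hseg : h p1 ∈ openSegment ℝ (h p3) (h q3) := by
        refine ⟨1 - s3, s3, by linarith, hs3p, by ring, ?_⟩
        apply pt_ext
        · rw [pt_comb]
          linear_combination hxx0 - hx30 + hx10 - (h q1 0 - h p1 0) * hs1z
        · rw [pt_comb]
          linear_combination hxx1 - hx31 + hx11 - (h q1 1 - h p1 1) * hs1z
      have := (hextr p1 hp1m (h p3) (h q3) (hmem p3 hp3m) (hmem q3 hq3m) hseg).1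
      exact hne13 (hinj' p1 p3 hp1m hp3m this.symm)
  · rcases eq_or_lt_of_le hs3_0 with hs3z | hs3p
    · -- h p3 ∈ openSegment (h p1) (h q1)
      have hseg : h p3 ∈ openSegment ℝ (h p1) (h q1) := by
        refine ⟨1 - s1, s1, by linarith, hs1p, by ring, ?_⟩
        apply pt_ext
        · rw [pt_comb]
          linear_combination -hx10 - hxx0 + hx30 - (h q3 0 - h p3 0) * hs3z
        · rw [pt_comb]
          linear_combination -hx11 - hxx1 + hx31 - (h q3 1 - h p3 1) * hs3z
      have := (hextr p3 hp3m (h p1) (h q1) (hmem p1 hp1m) (hmem q1 hq1m) hseg).1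
      exact hne13 (hinj' p1 p3 hp1m hp3m this)
    · -- both interior: the two edges are collinear
      have hL1x3z : (h q1 0 - h p1 0) * (x31 - h p1 1) - (h q1 1 - h p1 1) * (x30 - h p1 0)
          = 0 := by rw [hstep1, hK0]; ring
      have hL3x1z : (h q3 0 - h p3 0) * (x11 - h p3 1) - (h q3 1 - h p3 1) * (x10 - h p3 0)
          = 0 := by rw [hstep3, hK0]; ring
      set C := (h q1 0 - h p1 0) * (h q3 1 - h p3 1) - (h q1 1 - h p1 1) * (h q3 0 - h p3 0)
        with hCdef
      have hA3 : (h q1 0 - h p1 0) * (h p3 1 - h p1 1) - (h q1 1 - h p1 1) * (h p3 0 - h p1 0)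
          = -(s3 * C) := by
        rw [hCdef]
        linear_combination hL1x3z + (h q1 1 - h p1 1) * hx30 - (h q1 0 - h p1 0) * hx31
      have hA1 : (h q3 0 - h p3 0) * (h p1 1 - h p3 1) - (h q3 1 - h p3 1) * (h p1 0 - h p3 0)
          = s1 * C := by
        rw [hCdef]
        linear_combination hL3x1z + (h q3 1 - h p3 1) * hx10 - (h q3 0 - h p3 0) * hx11
      have hC0 : C = 0 := by
        have h5 : 0 ≤ s3 * (-C) := by rw [hA3] at c13a; linarith
        have h6 : 0 ≤ -C := (mul_nonneg_iff_of_pos_left hs3p).1 h5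
        have h7 : 0 ≤ s1 * C := by rw [hA1] at c31a; linarith
        have h8 : 0 ≤ C := (mul_nonneg_iff_of_pos_left hs1p).1 h7
        linarith
      -- h p3 lies on the line through h p1, h q1
      have hcol : (h q1 0 - h p1 0) * (h p3 1 - h p1 1)
          - (h q1 1 - h p1 1) * (h p3 0 - h p1 0) = 0 := by
        rw [hA3, hC0]; ring
      have hCS : (u * (h q1 0 - h p1 0) + v * (h q1 1 - h p1 1)) ^ 2
          + (u * (h q1 1 - h p1 1) - v * (h q1 0 - h p1 0)) ^ 2
          = (h q1 0 - h p1 0) ^ 2 + (h q1 1 - h p1 1) ^ 2 := by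
        linear_combination ((h q1 0 - h p1 0) ^ 2 + (h q1 1 - h p1 1) ^ 2) * huv
      have hSpos : 0 < (h q1 0 - h p1 0) ^ 2 + (h q1 1 - h p1 1) ^ 2 := by
        have hδsq : 0 < (u * (h q1 0 - h p1 0) + v * (h q1 1 - h p1 1)) ^ 2 := by
          have : (u * (h q1 0 - h p1 0) + v * (h q1 1 - h p1 1)) ^ 2
              = ((u * h p1 0 + v * h p1 1) - (u * h q1 0 + v * h q1 1)) ^ 2 := by ring
          rw [this]
          exact pow_pos hd1 2
        have hsq2 := sq_nonneg (u * (h q1 1 - h p1 1) - v * (h q1 0 - h p1 0))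
        linarith [hCS]
      set rr := ((h q1 0 - h p1 0) * (h p3 0 - h p1 0) + (h q1 1 - h p1 1) * (h p3 1 - h p1 1))
          / ((h q1 0 - h p1 0) ^ 2 + (h q1 1 - h p1 1) ^ 2) with hrrdef
      have hrS : rr * ((h q1 0 - h p1 0) ^ 2 + (h q1 1 - h p1 1) ^ 2)
          = (h q1 0 - h p1 0) * (h p3 0 - h p1 0) + (h q1 1 - h p1 1) * (h p3 1 - h p1 1) :=
        div_mul_cancel₀ _ (ne_of_gt hSpos)
      have he0 : h p3 0 - h p1 0 = rr * (h q1 0 - h p1 0) := by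
        have key : (h p3 0 - h p1 0) * ((h q1 0 - h p1 0) ^ 2 + (h q1 1 - h p1 1) ^ 2)
            = ((h q1 0 - h p1 0) * (h p3 0 - h p1 0) + (h q1 1 - h p1 1) * (h p3 1 - h p1 1))
              * (h q1 0 - h p1 0) := by linear_combination -(h q1 1 - h p1 1) * hcol
        have h2' : (rr * (h q1 0 - h p1 0)) * ((h q1 0 - h p1 0) ^ 2 + (h q1 1 - h p1 1) ^ 2)
            = ((h q1 0 - h p1 0) * (h p3 0 - h p1 0) + (h q1 1 - h p1 1) * (h p3 1 - h p1 1))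
              * (h q1 0 - h p1 0) := by linear_combination (h q1 0 - h p1 0) * hrS
        exact mul_right_cancel₀ (ne_of_gt hSpos) (key.trans h2'.symm)
      have he1 : h p3 1 - h p1 1 = rr * (h q1 1 - h p1 1) := by
        have key : (h p3 1 - h p1 1) * ((h q1 0 - h p1 0) ^ 2 + (h q1 1 - h p1 1) ^ 2)
            = ((h q1 0 - h p1 0) * (h p3 0 - h p1 0) + (h q1 1 - h p1 1) * (h p3 1 - h p1 1))
              * (h q1 1 - h p1 1) := by linear_combination (h q1 0 - h p1 0) * hcol
        have h2' : (rr * (h q1 1 - h p1 1)) * ((h q1 0 - h p1 0) ^ 2 + (h q1 1 - h p1 1) ^ 2)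
            = ((h q1 0 - h p1 0) * (h p3 0 - h p1 0) + (h q1 1 - h p1 1) * (h p3 1 - h p1 1))
              * (h q1 1 - h p1 1) := by linear_combination (h q1 1 - h p1 1) * hrS
        exact mul_right_cancel₀ (ne_of_gt hSpos) (key.trans h2'.symm)
      rcases lt_trichotomy rr 0 with hrneg | hrz | hrpos
      · -- h p1 ∈ openSegment (h p3) (h q1)
        have h1r : 0 < 1 - rr := by linarith
        have hσpos : 0 < -rr / (1 - rr) := div_pos (by linarith) h1r
        have hσe : (-rr / (1 - rr)) * (1 - rr) = -rr := div_mul_cancel₀ _ (ne_of_gt h1r)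
        have hσlt : 0 < 1 - -rr / (1 - rr) := by
          have : 1 - -rr / (1 - rr) = 1 / (1 - rr) := by
            field_simp
            ring
          rw [this]
          positivity
        have hseg : h p1 ∈ openSegment ℝ (h p3) (h q1) := by
          refine ⟨1 - -rr / (1 - rr), -rr / (1 - rr), hσlt, hσpos, by ring, ?_⟩
          apply pt_ext
          · rw [pt_comb]
            linear_combination (1 - -rr / (1 - rr)) * he0 + (h q1 0 - h p1 0) * hσe
          · rw [pt_comb]
            linear_combination (1 - -rr / (1 - rr)) * he1 + (h q1 1 - h p1 1) * hσe
        have := (hextr p1 hp1m (h p3) (h q1) (hmem p3 hp3m) (hmem q1 hq1m) hseg).1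
        exact hne13 (hinj' p1 p3 hp1m hp3m this.symm)
      · -- rr = 0 : h p3 = h p1
        have : h p3 = h p1 := by
          apply pt_ext
          · rw [hrz] at he0; linarith
          · rw [hrz] at he1; linarith
        exact hne13 (hinj' p1 p3 hp1m hp3m this.symm)
      · rcases lt_trichotomy rr 1 with hrlt | hre | hrgt
        · -- h p3 ∈ openSegment (h p1) (h q1)
          have hseg : h p3 ∈ openSegment ℝ (h p1) (h q1) := by
            refine ⟨1 - rr, rr, by linarith, hrpos, by ring, ?_⟩
            apply pt_ext
            · rw [pt_comb]; linear_combination -he0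
            · rw [pt_comb]; linear_combination -he1
          have := (hextr p3 hp3m (h p1) (h q1) (hmem p1 hp1m) (hmem q1 hq1m) hseg).1
          exact hne13 (hinj' p1 p3 hp1m hp3m this)
        · -- rr = 1 : h p3 = h q1
          have : h p3 = h q1 := by
            apply pt_ext
            · rw [hre] at he0; linarith
            · rw [hre] at he1; linarith
          exact hne3q1 (hinj' p3 q1 hp3m hq1m this)
        · -- h q1 ∈ openSegment (h p1) (h p3)
          have hrne : rr ≠ 0 := by linarith
          have hσe : 1 / rr * rr = 1 := by field_simp
          have hσpos : 0 < 1 / rr := by positivity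
          have hσlt : 0 < 1 - 1 / rr := by
            have : 1 / rr < 1 := by
              rw [div_lt_one hrpos]; linarith
            linarith
          have hseg : h q1 ∈ openSegment ℝ (h p1) (h p3) := by
            refine ⟨1 - 1 / rr, 1 / rr, hσlt, hσpos, by ring, ?_⟩
            apply pt_ext
            · rw [pt_comb]
              linear_combination (1 / rr) * he0 + (h q1 0 - h p1 0) * hσe
            · rw [pt_comb]
              linear_combination (1 / rr) * he1 + (h q1 1 - h p1 1) * hσe
          have := (hextr q1 hq1m (h p1) (h p3) (hmem p1 hp1m) (hmem p3 hp3m) hseg).1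
          exact hne11 (hinj' p1 q1 hp1m hq1m this)



lemma sum_shift (F : ℕ → ℝ) (m : ℕ) (hF : ∀ j, F (j + m) = F j) (s : ℕ) :
    ∑ j ∈ Finset.range m, F (s + j) = ∑ j ∈ Finset.range m, F j := by
  induction s with
  | zero => simp
  | succ n ih =>
    rw [← ih]
    have h1 := Finset.sum_range_succ (fun j => F (n + j)) m
    have h2 := Finset.sum_range_succ' (fun j => F (n + j)) m
    have e : ∑ j ∈ Finset.range m, F (n + 1 + j) = ∑ j ∈ Finset.range m, F (n + (j + 1)) := by
      apply Finset.sum_congr rfl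
      intro j _
      congr 1
      omega
    have hFn : F (n + m) = F n := hF n
    simp only [Nat.add_zero] at h2
    rw [e]
    linarith [h1, h2]

lemma abs_sub_le_sum_Ico (g : ℕ → ℝ) : ∀ b a, a ≤ b →
    |g b - g a| ≤ ∑ k ∈ Finset.Ico a b, |g (k + 1) - g k| := by
  intro b
  induction b with
  | zero =>
    intro a ha
    interval_cases a
    simp
  | succ n ih =>
    intro a ha
    by_cases h' : a ≤ n
    · have h1 := ih a h'
      rw [Finset.sum_Ico_succ_top h']
      have htri : |g (n + 1) - g a| ≤ |g (n + 1) - g n| + |g n - g a| := abs_sub_le _ _ _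
      linarith
    · have : a = n + 1 := by omega
      subst this
      simp

lemma closed_walk_bound (g : ℕ → ℝ) (N : ℕ) (hg : g N = g 0) (k1 k2 : ℕ)
    (hk1 : k1 < N) (hk2 : k2 < N) :
    2 * |g k1 - g k2| ≤ ∑ k ∈ Finset.range N, |g (k + 1) - g k| := by
  wlog hle : k1 ≤ k2 generalizing k1 k2
  · rw [abs_sub_comm]
    exact this k2 k1 hk2 hk1 (by omega)
  have e2 : ∑ k ∈ Finset.Ico 0 k1, |g (k + 1) - g k| + ∑ k ∈ Finset.Ico k1 k2, |g (k + 1) - g k|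
      = ∑ k ∈ Finset.Ico 0 k2, |g (k + 1) - g k| :=
    Finset.sum_Ico_consecutive _ (Nat.zero_le k1) hle
  have e3 : ∑ k ∈ Finset.Ico 0 k2, |g (k + 1) - g k| + ∑ k ∈ Finset.Ico k2 N, |g (k + 1) - g k|
      = ∑ k ∈ Finset.Ico 0 N, |g (k + 1) - g k| :=
    Finset.sum_Ico_consecutive _ (Nat.zero_le k2) (le_of_lt hk2)
  have b1 := abs_sub_le_sum_Ico g k1 0 (Nat.zero_le k1)
  have b2 := abs_sub_le_sum_Ico g k2 k1 hle
  have b3 := abs_sub_le_sum_Ico g N k2 (le_of_lt hk2)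
  have t1 : |g k1 - g k2| = |g k2 - g k1| := abs_sub_comm _ _
  have t2 : |g k1 - g k2| ≤ |g k1 - g 0| + |g 0 - g k2| := abs_sub_le _ _ _
  have t3 : |g 0 - g k2| = |g N - g k2| := by rw [hg]
  rw [Finset.range_eq_Ico]
  linarith

set_option maxHeartbeats 1000000 in
lemma key_dir
    (P : Finset (EuclideanSpace ℝ (Fin 2)))
    (m : ℕ) (hm : 3 ≤ m) (h : ℕ → EuclideanSpace ℝ (Fin 2))
    (hinj : Set.InjOn h (Set.Iio m))
    (hext : ∀ j < m, h j ∈ Set.extremePoints ℝ (convexHull ℝ (P : Set (EuclideanSpace ℝ (Fin 2)))))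
    (hP : ∀ j < m, h j ∈ P)
    (hccw : ∀ j < m, ∀ p ∈ P, 0 ≤ cross2 (h j) (h ((j + 1) % m)) p)
    (u v : ℝ) (huv : u ^ 2 + v ^ 2 = 1) :
    ∃ jM < m, ∃ jm < m,
      ∑ j ∈ Finset.range m,
        |(u * h ((j + 1) % m) 0 + v * h ((j + 1) % m) 1) - (u * h j 0 + v * h j 1)|
      ≤ 2 * ((u * h jM 0 + v * h jM 1) - (u * h jm 0 + v * h jm 1)) := by
  have hm0 : 0 < m := by omega
  set y : ℕ → ℝ := fun j => u * h (j % m) 0 + v * h (j % m) 1 with hy_def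
  have hy : ∀ j, y (j + m) = y j := by
    intro j
    simp only [hy_def, Nat.add_mod_right]
  have hyy : ∀ j, y j = y (j % m) := by
    intro j
    simp only [hy_def]
    rw [Nat.mod_mod_of_dvd j (dvd_refl m)]
  obtain ⟨j0, hj0mem, hj0max⟩ :=
    Finset.exists_max_image (Finset.range m) y ⟨0, Finset.mem_range.2 hm0⟩
  have hj0m : j0 < m := Finset.mem_range.1 hj0mem
  have hmax : ∀ i, y i ≤ y j0 := by
    intro i
    rw [hyy i]
    exact hj0max _ (Finset.mem_range.2 (Nat.mod_lt _ hm0))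
  set z : ℕ → ℝ := fun i => y (j0 + i) with hz_def
  have hz0 : ∀ i, z i ≤ z 0 := by
    intro i
    simp only [hz_def, Nat.add_zero]
    exact hmax _
  have hzm : z m = z 0 := by
    simp only [hz_def, Nat.add_zero]
    exact hy j0
  -- the sum equals the shifted sum
  have hGper : ∀ j, |y (j + m + 1) - y (j + m)| = |y (j + 1) - y j| := by
    intro j
    have e : j + m + 1 = (j + 1) + m := by omega
    rw [e, hy, hy]
  have hsum_shift : ∑ j ∈ Finset.range m, |y (j + 1) - y j|
      = ∑ i ∈ Finset.range m, |z (i + 1) - z i| := by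
    have := sum_shift (fun j => |y (j + 1) - y j|) m hGper j0
    simp only [hz_def]
    rw [← this]
    apply Finset.sum_congr rfl
    intro i _
    rfl
  have hsum_eq : ∑ j ∈ Finset.range m,
      |(u * h ((j + 1) % m) 0 + v * h ((j + 1) % m) 1) - (u * h j 0 + v * h j 1)|
      = ∑ j ∈ Finset.range m, |y (j + 1) - y j| := by
    apply Finset.sum_congr rfl
    intro j hj
    have hjm := Finset.mem_range.1 hj
    have e1 : y (j + 1) = u * h ((j + 1) % m) 0 + v * h ((j + 1) % m) 1 := by
      simp only [hy_def]
    have e2 : y j = u * h j 0 + v * h j 1 := by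
      simp only [hy_def, Nat.mod_eq_of_lt hjm]
    rw [e1, e2]
  by_cases hpat : ∃ p q r, 0 < p ∧ p < q ∧ q < r ∧ r < m ∧ z p < z q ∧ z r < z q
  · exfalso
    obtain ⟨p, q, r, hp0, hpq, hqr, hrm, hzpq, hzrq⟩ := hpat
    have hzq0 : z q ≤ z 0 := hz0 q
    have hzp0 : z p < z 0 := lt_of_lt_of_le hzpq hzq0
    have hzr0 : z r < z 0 := lt_of_lt_of_le hzrq hzq0
    -- values of z at wrapped / unwrapped indices
    have hzval : ∀ i, j0 + i < m → z i = u * h (j0 + i) 0 + v * h (j0 + i) 1 := by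
      intro i hi
      simp only [hz_def, hy_def, Nat.mod_eq_of_lt hi]
    have hzval' : ∀ i, m ≤ j0 + i → i < m →
        z i = u * h (j0 + i - m) 0 + v * h (j0 + i - m) 1 := by
      intro i hi him
      have e : (j0 + i) % m = j0 + i - m := by
        rw [Nat.mod_eq_sub_mod hi, Nat.mod_eq_of_lt (by omega)]
      simp only [hz_def, hy_def, e]
    have hz00 : z 0 = u * h j0 0 + v * h j0 1 := by
      have := hzval 0 (by omega)
      simpa using this
    have hneg : (-u) ^ 2 + (-v) ^ 2 = 1 := by linear_combination huv
    by_cases c1 : j0 + r < m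
    · -- quadruple (j0, j0+p, j0+q, j0+r), pattern 1 with f
      have vp := hzval p (by omega)
      have vq := hzval q (by omega)
      have vr := hzval r (by omega)
      exact no_alternation P m h hinj hext hP hccw u v huv
        j0 (j0 + p) (j0 + q) (j0 + r) (by omega) (by omega) (by omega) c1
        (by rw [← vp, ← hz00]; exact hzp0)
        (by rw [← vp, ← vq]; exact hzpq)
        (by rw [← vr, ← hz00]; exact hzr0)
        (by rw [← vr, ← vq]; exact hzrq)
    · by_cases c2 : j0 + q < m
      · -- quadruple (j0+r-m, j0, j0+p, j0+q), pattern 2 → use -f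
        have vp := hzval p (by omega)
        have vq := hzval q (by omega)
        have vr := hzval' r (by omega) hrm
        exact no_alternation P m h hinj hext hP hccw (-u) (-v) hneg
          (j0 + r - m) j0 (j0 + p) (j0 + q) (by omega) (by omega) (by omega) c2
          (by have := hzr0; rw [hz00, vr] at this; linarith)
          (by have := hzp0; rw [hz00, vp] at this; linarith)
          (by have := hzrq; rw [vq, vr] at this; linarith)
          (by have := hzpq; rw [vq, vp] at this; linarith)
      · by_cases c3 : j0 + p < m
        · -- quadruple (j0+q-m, j0+r-m, j0, j0+p), pattern 1 with f
          have vp := hzval p c3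
          have vq := hzval' q (by omega) (by omega)
          have vr := hzval' r (by omega) hrm
          exact no_alternation P m h hinj hext hP hccw u v huv
            (j0 + q - m) (j0 + r - m) j0 (j0 + p) (by omega) (by omega) (by omega) (by omega)
            (by rw [← vr, ← vq]; exact hzrq)
            (by rw [← vr, ← hz00]; exact hzr0)
            (by rw [← vp, ← vq]; exact hzpq)
            (by rw [← vp, ← hz00]; exact hzp0)
        · -- quadruple (j0+p-m, j0+q-m, j0+r-m, j0), pattern 2 → use -f
          have vp := hzval' p (by omega) (by omega)
          have vq := hzval' q (by omega) (by omega)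
          have vr := hzval' r (by omega) hrm
          exact no_alternation P m h hinj hext hP hccw (-u) (-v) hneg
            (j0 + p - m) (j0 + q - m) (j0 + r - m) j0 (by omega) (by omega) (by omega) hj0m
            (by have := hzpq; rw [vq, vp] at this; linarith)
            (by have := hzp0; rw [hz00, vp] at this; linarith)
            (by have := hzrq; rw [vq, vr] at this; linarith)
            (by have := hzr0; rw [hz00, vr] at this; linarith)
  · push_neg at hpat
    obtain ⟨vmin, hvmem, hvmin⟩ :=
      Finset.exists_min_image (Finset.Ico 1 m) z ⟨1, Finset.mem_Ico.2 ⟨le_refl 1, by omega⟩⟩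
    obtain ⟨hv1, hvm⟩ := Finset.mem_Ico.1 hvmem
    have hminle : ∀ i, 1 ≤ i → i < m → z vmin ≤ z i := fun i h1 h2 =>
      hvmin i (Finset.mem_Ico.2 ⟨h1, h2⟩)
    -- descending before vmin
    have hdown : ∀ i, i < vmin → z (i + 1) ≤ z i := by
      intro i hi
      by_contra hlt
      push_neg at hlt
      rcases Nat.eq_zero_or_pos i with hi0 | hipos
      · subst hi0
        exact absurd (hz0 1) (not_le.2 hlt)
      · by_cases hiv : i + 1 = vmin
        · have := hminle i hipos (by omega)
          rw [hiv] at hlt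
          linarith
        · have := hpat i (i + 1) vmin hipos (Nat.lt_succ_self i) (by omega) hvm hlt
          have h2 := hminle i hipos (by omega)
          linarith
    -- ascending after vmin
    have hup : ∀ i, vmin ≤ i → i < m → z i ≤ z (i + 1) := by
      intro i hvi him
      by_contra hlt
      push_neg at hlt
      by_cases hi1 : i + 1 = m
      · have h1 := hz0 i
        rw [hi1] at hlt
        rw [hzm] at hlt
        linarith
      · by_cases hiv : vmin = i
        · have := hminle (i + 1) (by omega) (by omega)
          rw [hiv] at this
          linarith
        · have h5 := hminle (i + 1) (by omega) (by omega)
          have := hpat vmin i (i + 1) (by omega) (by omega) (Nat.lt_succ_self i) (by omega)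
            (by linarith)
          linarith
    -- total variation bound
    have habs2 : ∀ x : ℝ, |x| = 2 * max x 0 - x := by
      intro x
      rcases le_total x 0 with hx | hx
      · rw [abs_of_nonpos hx, max_eq_right hx]
        ring
      · rw [abs_of_nonneg hx, max_eq_left hx]
        ring
    have hTV : ∑ i ∈ Finset.range m, |z (i + 1) - z i|
        = 2 * ∑ i ∈ Finset.range m, max (z (i + 1) - z i) 0
          - ∑ i ∈ Finset.range m, (z (i + 1) - z i) := by
      rw [Finset.mul_sum, ← Finset.sum_sub_distrib]
      apply Finset.sum_congr rfl
      intro i _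
      exact habs2 _
    have htel : ∑ i ∈ Finset.range m, (z (i + 1) - z i) = 0 := by
      rw [Finset.sum_range_sub z m, hzm]
      ring
    have hsplit : ∑ i ∈ Finset.range m, max (z (i + 1) - z i) 0 = z 0 - z vmin := by
      rw [Finset.range_eq_Ico,
        ← Finset.sum_Ico_consecutive _ (Nat.zero_le vmin) (le_of_lt hvm)]
      have hA : ∑ i ∈ Finset.Ico 0 vmin, max (z (i + 1) - z i) 0 = 0 := by
        apply Finset.sum_eq_zero
        intro i hi
        have := hdown i (Finset.mem_Ico.1 hi).2
        exact max_eq_right (by linarith)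
      have hB : ∑ i ∈ Finset.Ico vmin m, max (z (i + 1) - z i) 0
          = ∑ i ∈ Finset.Ico vmin m, (z (i + 1) - z i) := by
        apply Finset.sum_congr rfl
        intro i hi
        obtain ⟨hi1, hi2⟩ := Finset.mem_Ico.1 hi
        have := hup i hi1 hi2
        exact max_eq_left (by linarith)
      have hC : ∑ i ∈ Finset.Ico vmin m, (z (i + 1) - z i) = z m - z vmin := by
        rw [Finset.sum_Ico_eq_sub _ (le_of_lt hvm), Finset.sum_range_sub z,
          Finset.sum_range_sub z]
        ring
      rw [hA, hB, hC, hzm]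
      ring
    refine ⟨j0, hj0m, (j0 + vmin) % m, Nat.mod_lt _ hm0, ?_⟩
    have hzv : z vmin = u * h ((j0 + vmin) % m) 0 + v * h ((j0 + vmin) % m) 1 := by
      simp only [hz_def, hy_def]
    have hz00 : z 0 = u * h j0 0 + v * h j0 1 := by
      simp only [hz_def, hy_def, Nat.add_zero, Nat.mod_eq_of_lt hj0m]
    rw [hsum_eq, hsum_shift, hTV, htel, hsplit, ← hzv, ← hz00]
    ring_nf
    linarith

/-- Let `P` be a finite set of points in the Euclidean plane whose
convex hull is a polygon with vertices `h 0, …, h (m-1)` (`m ≥ 3`) listed in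
counterclockwise cyclic order along the boundary of the convex hull (encoded:
the `h j`, for `j < m`, are pairwise distinct, they are exactly the extreme
points of the convex hull of `P`, and every point of `P` lies on the closed
left side of each directed edge `h j → h ((j+1) % m)`).  Then every closed
polygonal path `w 0, …, w N` (with `w N = w 0`) visiting every point of `P`
has total length at least the perimeter of the convex hull. -/

theorem closed_tour_length_ge_convex_hull_perimeter
    (P : Finset (EuclideanSpace ℝ (Fin 2)))
    (m : ℕ) (hm : 3 ≤ m)
    (h : ℕ → EuclideanSpace ℝ (Fin 2))
    (hinj : Set.InjOn h (Set.Iio m))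
    (hvert : h '' Set.Iio m
      = Set.extremePoints ℝ (convexHull ℝ (P : Set (EuclideanSpace ℝ (Fin 2)))))
    (hccw : ∀ j < m, ∀ p ∈ P, 0 ≤ cross2 (h j) (h ((j + 1) % m)) p)
    (N : ℕ) (w : ℕ → EuclideanSpace ℝ (Fin 2)) (hclosed : w N = w 0)
    (hvisit : ∀ p ∈ P, ∃ k < N, w k = p) :
    ∑ j ∈ Finset.range m, dist (h j) (h ((j + 1) % m))
      ≤ ∑ k ∈ Finset.range N, dist (w k) (w (k + 1)) := by
  have hmemext : ∀ j < m, h j ∈ Set.extremePoints ℝ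
      (convexHull ℝ (P : Set (EuclideanSpace ℝ (Fin 2)))) := by
    intro j hj
    rw [← hvert]
    exact ⟨j, Set.mem_Iio.2 hj, rfl⟩
  have hP : ∀ j < m, h j ∈ P := by
    intro j hj
    exact extremePoints_convexHull_subset (hmemext j hj)
  have hpoint : ∀ θ : ℝ,
      ∑ j ∈ Finset.range m,
        |(h ((j + 1) % m) 0 - h j 0) * Real.cos θ + (h ((j + 1) % m) 1 - h j 1) * Real.sin θ|
      ≤ ∑ k ∈ Finset.range N,
        |(w (k + 1) 0 - w k 0) * Real.cos θ + (w (k + 1) 1 - w k 1) * Real.sin θ| := by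
    intro θ
    set u := Real.cos θ with hu
    set v := Real.sin θ with hv
    have huv : u ^ 2 + v ^ 2 = 1 := by
      rw [hu, hv]
      exact Real.cos_sq_add_sin_sq θ
    obtain ⟨jM, hjM, jm, hjm, hkey⟩ := key_dir P m hm h hinj hmemext hP hccw u v huv
    obtain ⟨k1, hk1, hwk1⟩ := hvisit (h jM) (hP jM hjM)
    obtain ⟨k2, hk2, hwk2⟩ := hvisit (h jm) (hP jm hjm)
    set g : ℕ → ℝ := fun k => u * w k 0 + v * w k 1 with hg
    have hgN : g N = g 0 := by simp only [hg, hclosed]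
    have hwalk := closed_walk_bound g N hgN k1 k2 hk1 hk2
    have hval : g k1 - g k2 = (u * h jM 0 + v * h jM 1) - (u * h jm 0 + v * h jm 1) := by
      simp only [hg, hwk1, hwk2]
    have habs : g k1 - g k2 ≤ |g k1 - g k2| := le_abs_self _
    have hL : ∑ j ∈ Finset.range m,
        |(h ((j + 1) % m) 0 - h j 0) * u + (h ((j + 1) % m) 1 - h j 1) * v|
        = ∑ j ∈ Finset.range m,
          |(u * h ((j + 1) % m) 0 + v * h ((j + 1) % m) 1) - (u * h j 0 + v * h j 1)| := by
      apply Finset.sum_congr rfl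
      intro j _
      congr 1
      ring
    have hR : ∑ k ∈ Finset.range N, |g (k + 1) - g k|
        = ∑ k ∈ Finset.range N,
          |(w (k + 1) 0 - w k 0) * u + (w (k + 1) 1 - w k 1) * v| := by
      apply Finset.sum_congr rfl
      intro k _
      simp only [hg]
      congr 1
      ring
    calc ∑ j ∈ Finset.range m,
        |(h ((j + 1) % m) 0 - h j 0) * u + (h ((j + 1) % m) 1 - h j 1) * v|
        = ∑ j ∈ Finset.range m,
          |(u * h ((j + 1) % m) 0 + v * h ((j + 1) % m) 1) - (u * h j 0 + v * h j 1)| := hL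
      _ ≤ 2 * ((u * h jM 0 + v * h jM 1) - (u * h jm 0 + v * h jm 1)) := hkey
      _ ≤ 2 * |g k1 - g k2| := by rw [← hval]; linarith
      _ ≤ ∑ k ∈ Finset.range N, |g (k + 1) - g k| := hwalk
      _ = _ := hR
  have hcont : ∀ p q : EuclideanSpace ℝ (Fin 2), Continuous fun θ : ℝ =>
      |(q 0 - p 0) * Real.cos θ + (q 1 - p 1) * Real.sin θ| :=
    fun p q => ((continuous_const.mul Real.continuous_cos).add
      (continuous_const.mul Real.continuous_sin)).abs
  have hint : ∀ p q : EuclideanSpace ℝ (Fin 2), IntervalIntegrable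
      (fun θ : ℝ => |(q 0 - p 0) * Real.cos θ + (q 1 - p 1) * Real.sin θ|)
      MeasureTheory.volume 0 (2 * π) :=
    fun p q => (hcont p q).intervalIntegrable 0 (2 * π)
  have hdist : ∀ p q : EuclideanSpace ℝ (Fin 2),
      (∫ θ in (0:ℝ)..(2 * π),
        |(q 0 - p 0) * Real.cos θ + (q 1 - p 1) * Real.sin θ|) = 4 * dist p q := by
    intro p q
    rw [integral_abs_lin]
    congr 1
    rw [EuclideanSpace.dist_eq]
    congr 1
    rw [Fin.sum_univ_two, Real.dist_eq, Real.dist_eq, sq_abs, sq_abs]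
    ring
  have hi1 : (∫ θ in (0:ℝ)..(2 * π), ∑ j ∈ Finset.range m,
        |(h ((j + 1) % m) 0 - h j 0) * Real.cos θ + (h ((j + 1) % m) 1 - h j 1) * Real.sin θ|)
      = ∑ j ∈ Finset.range m, ∫ θ in (0:ℝ)..(2 * π),
        |(h ((j + 1) % m) 0 - h j 0) * Real.cos θ + (h ((j + 1) % m) 1 - h j 1) * Real.sin θ| :=
    intervalIntegral.integral_finset_sum (fun j _ => hint (h j) (h ((j + 1) % m)))
  have hi2 : (∫ θ in (0:ℝ)..(2 * π), ∑ k ∈ Finset.range N,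
        |(w (k + 1) 0 - w k 0) * Real.cos θ + (w (k + 1) 1 - w k 1) * Real.sin θ|)
      = ∑ k ∈ Finset.range N, ∫ θ in (0:ℝ)..(2 * π),
        |(w (k + 1) 0 - w k 0) * Real.cos θ + (w (k + 1) 1 - w k 1) * Real.sin θ| :=
    intervalIntegral.integral_finset_sum (fun k _ => hint (w k) (w (k + 1)))
  have hmono : (∫ θ in (0:ℝ)..(2 * π), ∑ j ∈ Finset.range m,
        |(h ((j + 1) % m) 0 - h j 0) * Real.cos θ + (h ((j + 1) % m) 1 - h j 1) * Real.sin θ|)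
      ≤ ∫ θ in (0:ℝ)..(2 * π), ∑ k ∈ Finset.range N,
        |(w (k + 1) 0 - w k 0) * Real.cos θ + (w (k + 1) 1 - w k 1) * Real.sin θ| := by
    apply intervalIntegral.integral_mono_on (by positivity)
    · exact (continuous_finset_sum _
        (fun j _ => hcont (h j) (h ((j + 1) % m)))).intervalIntegrable 0 (2 * π)
    · exact (continuous_finset_sum _
        (fun k _ => hcont (w k) (w (k + 1)))).intervalIntegrable 0 (2 * π)
    · exact fun x _ => hpoint x
  have hfin : ∑ j ∈ Finset.range m, 4 * dist (h j) (h ((j + 1) % m))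
      ≤ ∑ k ∈ Finset.range N, 4 * dist (w k) (w (k + 1)) := by
    calc ∑ j ∈ Finset.range m, 4 * dist (h j) (h ((j + 1) % m))
        = ∑ j ∈ Finset.range m, ∫ θ in (0:ℝ)..(2 * π),
          |(h ((j + 1) % m) 0 - h j 0) * Real.cos θ + (h ((j + 1) % m) 1 - h j 1) * Real.sin θ| := by
          apply Finset.sum_congr rfl
          intro j _
          exact (hdist (h j) (h ((j + 1) % m))).symm
      _ = _ := hi1.symm
      _ ≤ _ := hmono
      _ = _ := hi2
      _ = ∑ k ∈ Finset.range N, 4 * dist (w k) (w (k + 1)) := by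
          apply Finset.sum_congr rfl
          intro k _
          exact hdist (w k) (w (k + 1))
  have e1 : ∑ j ∈ Finset.range m, 4 * dist (h j) (h ((j + 1) % m))
      = 4 * ∑ j ∈ Finset.range m, dist (h j) (h ((j + 1) % m)) := by
    rw [Finset.mul_sum]
  have e2 : ∑ k ∈ Finset.range N, 4 * dist (w k) (w (k + 1))
      = 4 * ∑ k ∈ Finset.range N, dist (w k) (w (k + 1)) := by
    rw [Finset.mul_sum]
  rw [e1, e2] at hfin
  linarith
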